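/- Let C be a d-dimensional copula and C_T the copula of its order transform. Then Kendall's distribution function of C_T is pointwise at most Kendall's distribution function of C, i.e., K_{C_T}(t) ≤ K_C(t) for all t ∈ [0,1], where K_C(t) := Q^C[{u ∈ [0,1]^d : C(u) ≤ t}]. -/

import Mathlib

open MeasureTheory

/-- A copula measure: a probability measure on `[0,1]^d` (viewed inside
`Fin d → ℝ`) all of whose univariate marginals are uniform on `[0,1]`. -/
def IsCopulaMeasure {d : ℕ} (μ : Measure (Fin d → ℝ)) : Prop :=
  IsProbabilityMeasure μ ∧
    ∀ i : Fin d, μ.map (fun x => x i) = volume.restrict (Set.Icc 0 1)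

/-- The copula (distribution function) associated with a copula measure. -/
noncomputable def copulaFn {d : ℕ} (μ : Measure (Fin d → ℝ)) (u : Fin d → ℝ) : ℝ :=
  (μ {x | ∀ i, x i ≤ u i}).toReal

/-- The sorting (order statistic) map: `sortVec x` is the nondecreasing
rearrangement of the vector `x`. -/
noncomputable def sortVec {d : ℕ} (x : Fin d → ℝ) : Fin d → ℝ :=
  x ∘ Tuple.sort x

/-- The `i`-th univariate marginal distribution function of a measure on
`Fin d → ℝ`. -/
noncomputable def margCDF {d : ℕ} (ρ : Measure (Fin d → ℝ)) (i : Fin d) (t : ℝ) : ℝ :=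
  (ρ.map (fun x => x i) (Set.Iic t)).toReal

/-- `ν` is the copula measure of the order transform `C_T` of the copula
with copula measure `μ`: Sklar's identity `H^C_T = C_T ∘ (marginals of H^C_T)`
holds, where `H^C_T` is the distribution function of the image of `μ` under
the sorting map. -/
def IsOrderTransform {d : ℕ} (μ ν : Measure (Fin d → ℝ)) : Prop :=
  IsCopulaMeasure ν ∧
    ∀ x : Fin d → ℝ,
      ((μ.map sortVec) {y | ∀ i, y i ≤ x i}).toReal
        = copulaFn ν (fun i => margCDF (μ.map sortVec) i (x i))

section Aux

open Set

variable {d : ℕ}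

lemma sortVec_apply (x : Fin d → ℝ) (i : Fin d) : sortVec x i = x (Tuple.sort x i) := rfl

lemma sortVec_le_iff (x : Fin d → ℝ) (i : Fin d) (a : ℝ) :
    sortVec x i ≤ a ↔ (i : ℕ) < Fintype.card {j // x j ≤ a} := by
  classical
  have h := (Tuple.lt_card_le_iff_apply_le_of_monotone (f := x ∘ Tuple.sort x) (a := a)
      (Tuple.monotone_sort x) (j := i))
  have hcard : Fintype.card {j // (x ∘ Tuple.sort x) j ≤ a} = Fintype.card {j // x j ≤ a} :=
    Fintype.card_congr (Equiv.subtypeEquiv (Tuple.sort x) (fun j => Iff.rfl))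
  rw [← hcard, Fintype.card_subtype]
  exact h.symm

lemma sortVec_mono {x y : Fin d → ℝ} (h : ∀ i, x i ≤ y i) (i : Fin d) :
    sortVec x i ≤ sortVec y i := by
  classical
  rw [sortVec_le_iff]
  have h0 := (sortVec_le_iff y i (sortVec y i)).1 le_rfl
  refine lt_of_lt_of_le h0 (Fintype.card_subtype_mono _ _ fun j hj => (h j).trans hj)

lemma measurable_sortVec : Measurable (sortVec (d := d)) := by
  classical
  refine measurable_pi_lambda _ fun i => measurable_of_Iic fun a => ?_
  have hset : (fun x : Fin d → ℝ => sortVec x i) ⁻¹' Set.Iic a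
      = ⋃ (S : Finset (Fin d)) (_ : (i : ℕ) < S.card),
          {x : Fin d → ℝ | ∀ j ∈ S, x j ≤ a} := by
    ext x
    simp only [Set.mem_preimage, Set.mem_Iic, sortVec_le_iff, Set.mem_iUnion, Set.mem_setOf_eq]
    constructor
    · intro hx
      refine ⟨Finset.univ.filter (fun j => x j ≤ a), ?_, fun j hj => (Finset.mem_filter.1 hj).2⟩
      rwa [Fintype.card_subtype] at hx
    · rintro ⟨S, hS, hSle⟩
      rw [Fintype.card_subtype]
      exact hS.trans_le (Finset.card_le_card fun j hj =>
        Finset.mem_filter.2 ⟨Finset.mem_univ j, hSle j hj⟩)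
  rw [hset]
  refine MeasurableSet.iUnion fun S => MeasurableSet.iUnion fun _ => ?_
  have : {x : Fin d → ℝ | ∀ j ∈ S, x j ≤ a} = ⋂ j ∈ S, (fun x : Fin d → ℝ => x j) ⁻¹' Iic a := by
    ext x; simp
  rw [this]
  exact MeasurableSet.biInter (S.countable_toSet) fun j _ =>
    (measurable_pi_apply j) measurableSet_Iic

lemma measure_congr_of_null {α : Type*} [MeasurableSpace α] (m : Measure α) {A B N : Set α}
    (hN : m N = 0) (h : ∀ x, x ∉ N → (x ∈ A ↔ x ∈ B)) : m A = m B := by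
  have key : ∀ A B : Set α, (∀ x, x ∉ N → (x ∈ A → x ∈ B)) → m A ≤ m B := by
    intro A B hAB
    calc m A ≤ m (B ∪ N) := measure_mono fun x hx => by
          by_cases hxN : x ∈ N
          · exact Or.inr hxN
          · exact Or.inl (hAB x hxN hx)
      _ ≤ m B + m N := measure_union_le _ _
      _ = m B := by rw [hN, add_zero]
  exact le_antisymm (key A B fun x hx => (h x hx).1) (key B A fun x hx => (h x hx).2)

/-- Key one-dimensional lemma: for an atomless probability measure supported in `[0,1]`
and a level `u ∈ [0,1)`, the sublevel set of the CDF at level `u` is exactly `Iic s`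
for some `s` with CDF value exactly `u`. -/
lemma exists_cdf_level (m : Measure ℝ) [IsProbabilityMeasure m]
    (hatom : ∀ c : ℝ, m {c} = 0) (h0 : m (Set.Iio 0) = 0) (h1 : m (Set.Iic 1) = 1)
    {u : ℝ} (hu0 : 0 ≤ u) (hu1 : u < 1) :
    ∃ s : ℝ, {t : ℝ | (m (Set.Iic t)).toReal ≤ u} = Set.Iic s
      ∧ (m (Set.Iic s)).toReal = u := by
  set f : ℝ → ℝ := fun t => (m (Set.Iic t)).toReal with hf
  have hmono : Monotone f := fun a b hab =>
    ENNReal.toReal_mono (measure_ne_top m _) (measure_mono (Iic_subset_Iic.2 hab))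
  set S : Set ℝ := {t : ℝ | f t ≤ u} with hS
  have hSne : (-1 : ℝ) ∈ S := by
    have hle : m (Set.Iic (-1 : ℝ)) = 0 :=
      le_antisymm (le_trans (measure_mono (show Set.Iic (-1 : ℝ) ⊆ Set.Iio 0 from
        fun x hx => by
          simp only [Set.mem_Iio]
          have := Set.mem_Iic.1 hx
          linarith)) h0.le) (zero_le)
    simp only [hS, Set.mem_setOf_eq, hf, hle, ENNReal.toReal_zero]
    exact hu0
  have hSub : ∀ t ∈ S, t ≤ 1 := by
    intro t ht
    by_contra hc
    push_neg at hc
    have : f 1 ≤ f t := hmono hc.le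
    have hf1 : f 1 = 1 := by simp [hf, h1]
    rw [hf1] at this
    exact absurd (le_trans this ht) (not_le.2 hu1)
  have hbdd : BddAbove S := ⟨1, hSub⟩
  set s : ℝ := sSup S with hs
  have hdown : ∀ {a b : ℝ}, a ≤ b → b ∈ S → a ∈ S := fun hab hb => le_trans (hmono hab) hb
  have hIio : Set.Iio s ⊆ S := by
    intro t ht
    obtain ⟨t', ht'S, htt'⟩ := exists_lt_of_lt_csSup ⟨-1, hSne⟩ ht
    exact hdown htt'.le ht'S
  -- measure of Iio s is at most u
  have hIioEq : Set.Iio s = ⋃ n : ℕ, Set.Iic (s - 1 / (n + 1)) := by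
    ext t
    simp only [Set.mem_Iio, Set.mem_iUnion, Set.mem_Iic]
    constructor
    · intro ht
      obtain ⟨n, hn⟩ := exists_nat_one_div_lt (sub_pos.2 ht)
      exact ⟨n, by linarith⟩
    · rintro ⟨n, hn⟩
      have : (0 : ℝ) < 1 / (n + 1) := by positivity
      linarith
  have hIioLe : m (Set.Iio s) ≤ ENNReal.ofReal u := by
    rw [hIioEq]
    have hmon : Monotone fun n : ℕ => Set.Iic (s - 1 / (n + 1 : ℝ)) := by
      intro a b hab
      refine Iic_subset_Iic.2 ?_
      have h1ab : 1 / ((b : ℝ) + 1) ≤ 1 / ((a : ℝ) + 1) := by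
        apply one_div_le_one_div_of_le
        · positivity
        · have hc : (a : ℝ) ≤ (b : ℝ) := Nat.cast_le.mpr hab
          linarith
      linarith
    rw [hmon.measure_iUnion]
    refine iSup_le fun n => ?_
    have hmem : s - 1 / (n + 1 : ℝ) ∈ S := by
      refine hIio ?_
      have : (0 : ℝ) < 1 / (n + 1) := by positivity
      simpa using sub_lt_self s this
    exact (ENNReal.le_ofReal_iff_toReal_le (measure_ne_top m _) hu0).2 hmem
  have hIicLe : m (Set.Iic s) ≤ ENNReal.ofReal u := by
    have hsub : Set.Iic s ⊆ Set.Iio s ∪ {s} := by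
      intro t ht
      rcases (Set.mem_Iic.1 ht).lt_or_eq with h | h
      · exact Or.inl h
      · exact Or.inr (by simp [h])
    calc m (Set.Iic s) ≤ m (Set.Iio s ∪ {s}) := measure_mono hsub
      _ ≤ m (Set.Iio s) + m {s} := measure_union_le _ _
      _ = m (Set.Iio s) := by rw [hatom s, add_zero]
      _ ≤ ENNReal.ofReal u := hIioLe
  have hfs_le : f s ≤ u := ENNReal.toReal_le_of_le_ofReal hu0 hIicLe
  have hSeq : S = Set.Iic s :=
    subset_antisymm (fun t ht => le_csSup hbdd ht) (fun t ht => hdown ht hfs_le)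
  have hfs_ge : u ≤ f s := by
    by_contra hc
    push_neg at hc
    have hIicInter : Set.Iic s = ⋂ n : ℕ, Set.Iic (s + 1 / (n + 1)) := by
      ext t
      simp only [Set.mem_Iic, Set.mem_iInter]
      constructor
      · intro ht n
        have : (0 : ℝ) < 1 / (n + 1) := by positivity
        linarith
      · intro h
        by_contra hts
        push_neg at hts
        obtain ⟨n, hn⟩ := exists_nat_one_div_lt (sub_pos.2 hts)
        linarith [h n]
    have hanti : Antitone fun n : ℕ => Set.Iic (s + 1 / (n + 1 : ℝ)) := by
      intro a b hab
      refine Iic_subset_Iic.2 ?_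
      have h1ab : 1 / ((b : ℝ) + 1) ≤ 1 / ((a : ℝ) + 1) := by
        apply one_div_le_one_div_of_le
        · positivity
        · have hc : (a : ℝ) ≤ (b : ℝ) := Nat.cast_le.mpr hab
          linarith
      linarith
    have hiInf : m (Set.Iic s) = ⨅ n : ℕ, m (Set.Iic (s + 1 / (n + 1))) := by
      rw [hIicInter]
      exact hanti.measure_iInter (fun n => measurableSet_Iic.nullMeasurableSet)
        ⟨0, measure_ne_top m _⟩
    have hlt : m (Set.Iic s) < ENNReal.ofReal u := by
      have : m (Set.Iic s) = ENNReal.ofReal (f s) := by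
        rw [hf]; rw [ENNReal.ofReal_toReal (measure_ne_top m _)]
      rw [this]
      exact (ENNReal.ofReal_lt_ofReal_iff (lt_of_le_of_lt ENNReal.toReal_nonneg hc)).2 hc
    rw [hiInf] at hlt
    obtain ⟨n, hn⟩ := iInf_lt_iff.1 hlt
    have hmemS : s + 1 / (n + 1 : ℝ) ∈ S := le_of_lt (ENNReal.toReal_lt_of_lt_ofReal hn)
    have : s + 1 / (n + 1 : ℝ) ≤ s := le_csSup hbdd hmemS
    have hpos : (0 : ℝ) < 1 / (n + 1) := by positivity
    linarith
  exact ⟨s, hSeq, le_antisymm hfs_le hfs_ge⟩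

end Aux

theorem stmt12 (d : ℕ) (hd : 2 ≤ d) (μ ν : Measure (Fin d → ℝ))
    (hμ : IsCopulaMeasure μ) (hν : IsOrderTransform μ ν)
    (t : ℝ) (ht : t ∈ Set.Icc (0 : ℝ) 1) :
    ν {u | copulaFn ν u ≤ t} ≤ μ {u | copulaFn μ u ≤ t} := by
  classical
  obtain ⟨hμprob, hμmarg⟩ := hμ
  obtain ⟨⟨hνprob, hνmarg⟩, hsk⟩ := hν
  haveI := hμprob
  haveI := hνprob
  have hsm : Measurable (sortVec (d := d)) := measurable_sortVec
  set ρ : Measure (Fin d → ℝ) := μ.map sortVec with hρdef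
  haveI : IsProbabilityMeasure ρ := by
    rw [hρdef]; exact Measure.isProbabilityMeasure_map hsm.aemeasurable
  -- quadrant sets are measurable
  have hquad : ∀ u : Fin d → ℝ, MeasurableSet {x : Fin d → ℝ | ∀ i, x i ≤ u i} := by
    intro u
    have h : {x : Fin d → ℝ | ∀ i, x i ≤ u i}
        = ⋂ i, (fun x : Fin d → ℝ => x i) ⁻¹' Set.Iic (u i) := by ext x; simp
    rw [h]
    exact MeasurableSet.iInter fun i => (measurable_pi_apply i) measurableSet_Iic
  -- marginal computations for copula measures
  have hmarg_set : ∀ κ : Measure (Fin d → ℝ),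
      (∀ i : Fin d, κ.map (fun x => x i) = volume.restrict (Set.Icc 0 1)) →
      ∀ (i : Fin d) (s : Set ℝ), MeasurableSet s →
        κ ((fun x : Fin d → ℝ => x i) ⁻¹' s) = volume (s ∩ Set.Icc 0 1) := by
    intro κ hκ i s hs
    rw [← Measure.map_apply (measurable_pi_apply i) hs, hκ i, Measure.restrict_apply hs]
  have hgt1 : ∀ κ : Measure (Fin d → ℝ),
      (∀ i : Fin d, κ.map (fun x => x i) = volume.restrict (Set.Icc 0 1)) →
      ∀ j : Fin d, κ {x : Fin d → ℝ | 1 < x j} = 0 := by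
    intro κ hκ j
    have h := hmarg_set κ hκ j (Set.Ioi 1) measurableSet_Ioi
    have he : Set.Ioi (1 : ℝ) ∩ Set.Icc 0 1 = ∅ := by
      rw [Set.eq_empty_iff_forall_notMem]
      rintro x ⟨hx1, hx2, hx3⟩
      exact absurd hx3 (not_le.2 hx1)
    rw [he, measure_empty] at h
    exact h
  have hμ_lt0 : ∀ j : Fin d, μ {x : Fin d → ℝ | x j < 0} = 0 := by
    intro j
    have h := hmarg_set μ hμmarg j (Set.Iio 0) measurableSet_Iio
    have he : Set.Iio (0 : ℝ) ∩ Set.Icc 0 1 = ∅ := by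
      rw [Set.eq_empty_iff_forall_notMem]
      rintro x ⟨hx1, hx2, hx3⟩
      exact absurd hx2 (not_le.2 hx1)
    rw [he, measure_empty] at h
    exact h
  have hμ_atom : ∀ (j : Fin d) (c : ℝ), μ {x : Fin d → ℝ | x j = c} = 0 := by
    intro j c
    have h := hmarg_set μ hμmarg j {c} (measurableSet_singleton c)
    have he : volume (({c} : Set ℝ) ∩ Set.Icc 0 1) = 0 :=
      measure_mono_null Set.inter_subset_left Real.volume_singleton
    rw [he] at h
    exact h
  -- null facts for ρ
  have hρ_pre : ∀ s : Set (Fin d → ℝ), MeasurableSet s → ρ s = μ (sortVec ⁻¹' s) := by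
    intro s hs
    rw [hρdef]; exact Measure.map_apply hsm hs
  have hρ_gt1 : ∀ j : Fin d, ρ {y : Fin d → ℝ | 1 < y j} = 0 := by
    intro j
    rw [hρ_pre _ (measurableSet_lt measurable_const (measurable_pi_apply j))]
    refine measure_mono_null ?_ (measure_iUnion_null (hgt1 μ hμmarg))
    intro v hv
    simp only [Set.mem_preimage, Set.mem_setOf_eq] at hv
    exact Set.mem_iUnion.2 ⟨Tuple.sort v j, hv⟩
  have hρ_lt0 : ∀ j : Fin d, ρ {y : Fin d → ℝ | y j < 0} = 0 := by
    intro j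
    rw [hρ_pre _ (measurableSet_lt (measurable_pi_apply j) measurable_const)]
    refine measure_mono_null ?_ (measure_iUnion_null hμ_lt0)
    intro v hv
    simp only [Set.mem_preimage, Set.mem_setOf_eq] at hv
    exact Set.mem_iUnion.2 ⟨Tuple.sort v j, hv⟩
  have hρ_atom : ∀ (j : Fin d) (c : ℝ), ρ {y : Fin d → ℝ | y j = c} = 0 := by
    intro j c
    rw [hρ_pre _ (measurableSet_eq_fun (measurable_pi_apply j) measurable_const)]
    refine measure_mono_null ?_ (measure_iUnion_null fun j => hμ_atom j c)
    intro v hv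
    simp only [Set.mem_preimage, Set.mem_setOf_eq] at hv
    exact Set.mem_iUnion.2 ⟨Tuple.sort v j, hv⟩
  -- the marginal measures of ρ
  have hmi_pre : ∀ (i : Fin d) (s : Set ℝ), MeasurableSet s →
      (ρ.map fun x : Fin d → ℝ => x i) s = ρ ((fun x : Fin d → ℝ => x i) ⁻¹' s) :=
    fun i s hs => Measure.map_apply (measurable_pi_apply i) hs
  haveI hmiprob : ∀ i : Fin d, IsProbabilityMeasure (ρ.map fun x : Fin d → ℝ => x i) :=
    fun i => Measure.isProbabilityMeasure_map (measurable_pi_apply i).aemeasurable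
  have hmi_atom : ∀ (i : Fin d) (c : ℝ), (ρ.map fun x : Fin d → ℝ => x i) {c} = 0 := by
    intro i c
    rw [hmi_pre i _ (measurableSet_singleton c)]
    exact hρ_atom i c
  have hmi_lt0 : ∀ i : Fin d, (ρ.map fun x : Fin d → ℝ => x i) (Set.Iio 0) = 0 := by
    intro i
    rw [hmi_pre i _ measurableSet_Iio]
    exact hρ_lt0 i
  have hmi_Iic1 : ∀ i : Fin d, (ρ.map fun x : Fin d → ℝ => x i) (Set.Iic 1) = 1 := by
    intro i
    haveI := hmiprob i
    have h2 : (ρ.map fun x : Fin d → ℝ => x i) (Set.Ioi 1) = 0 := by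
      rw [hmi_pre i _ measurableSet_Ioi]
      exact hρ_gt1 i
    have h3 := prob_compl_eq_one_sub (μ := ρ.map fun x : Fin d → ℝ => x i)
      (measurableSet_Ioi (a := (1 : ℝ)))
    rw [h2] at h3
    simpa [Set.compl_Ioi] using h3
  -- margCDF facts
  have hmarg_def : ∀ (i : Fin d) (a : ℝ),
      margCDF ρ i a = ((ρ.map fun x : Fin d → ℝ => x i) (Set.Iic a)).toReal := fun _ _ => rfl
  have hmargMono : ∀ i : Fin d, Monotone (margCDF ρ i) := fun i a b hab =>
    ENNReal.toReal_mono (measure_ne_top _ _) (measure_mono (Set.Iic_subset_Iic.2 hab))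
  have hmarg_le_one : ∀ (i : Fin d) (a : ℝ), margCDF ρ i a ≤ 1 := by
    intro i a
    haveI := hmiprob i
    rw [hmarg_def]
    exact ENNReal.toReal_le_of_le_ofReal zero_le_one (by simpa using prob_le_one)
  have hmarg2 : ∀ i : Fin d, margCDF ρ i 2 = 1 := by
    intro i
    haveI := hmiprob i
    rw [hmarg_def]
    have h1 : (ρ.map fun x : Fin d → ℝ => x i) (Set.Iic 2) = 1 := by
      refine le_antisymm prob_le_one ?_
      rw [← hmi_Iic1 i]
      exact measure_mono (Set.Iic_subset_Iic.2 (by norm_num))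
    rw [h1]
    simp
  -- the marginal transform map
  set F : (Fin d → ℝ) → (Fin d → ℝ) := fun x i => margCDF ρ i (x i) with hFdef
  have hFmeas : Measurable F := measurable_pi_lambda _ fun i =>
    (hmargMono i).measurable.comp (measurable_pi_apply i)
  haveI : IsProbabilityMeasure (ρ.map F) := Measure.isProbabilityMeasure_map hFmeas.aemeasurable
  -- measurability of the copula function of ν
  have hCν : Measurable (copulaFn ν) := by
    have hs : MeasurableSet {p : (Fin d → ℝ) × (Fin d → ℝ) | ∀ i, p.2 i ≤ p.1 i} := by
      have h : {p : (Fin d → ℝ) × (Fin d → ℝ) | ∀ i, p.2 i ≤ p.1 i}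
          = ⋂ i, {p : (Fin d → ℝ) × (Fin d → ℝ) | p.2 i ≤ p.1 i} := by ext p; simp
      rw [h]
      refine MeasurableSet.iInter fun i => ?_
      have h2i : Measurable fun p : (Fin d → ℝ) × (Fin d → ℝ) => p.2 i :=
        (measurable_pi_apply i).comp measurable_snd
      have h1i : Measurable fun p : (Fin d → ℝ) × (Fin d → ℝ) => p.1 i :=
        (measurable_pi_apply i).comp measurable_fst
      exact measurableSet_le h2i h1i
    have hm := measurable_measure_prodMk_left (ν := ν) hs
    exact ENNReal.measurable_toReal.comp hm
  -- main identity : ρ.map F and ν agree on lower quadrants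
  have hmain : ∀ u : Fin d → ℝ,
      (ρ.map F) {x : Fin d → ℝ | ∀ i, x i ≤ u i} = ν {x : Fin d → ℝ | ∀ i, x i ≤ u i} := by
    intro u
    rw [Measure.map_apply hFmeas (hquad u)]
    by_cases hneg : ∃ i, u i < 0
    · obtain ⟨i, hi⟩ := hneg
      have hL : F ⁻¹' {x : Fin d → ℝ | ∀ i, x i ≤ u i} = ∅ := by
        ext x
        simp only [Set.mem_preimage, Set.mem_setOf_eq, Set.mem_empty_iff_false, iff_false,
          not_forall]
        refine ⟨i, ?_⟩
        have h0 : (0 : ℝ) ≤ F x i := ENNReal.toReal_nonneg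
        intro hle
        linarith
      have hR : ν {x : Fin d → ℝ | ∀ i, x i ≤ u i} = 0 := by
        refine measure_mono_null (fun x hx => hx i) ?_
        have h := hmarg_set ν hνmarg i (Set.Iic (u i)) measurableSet_Iic
        have he : Set.Iic (u i) ∩ Set.Icc 0 1 = ∅ := by
          rw [Set.eq_empty_iff_forall_notMem]
          rintro x ⟨hx1, hx2, hx3⟩
          have hx1' := Set.mem_Iic.1 hx1
          linarith
        rw [he, measure_empty] at h
        exact h
      rw [hL, hR, measure_empty]
    · push_neg at hneg
      have hchoice : ∀ i : Fin d, ∃ s : ℝ,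
          (u i < 1 → ({a : ℝ | margCDF ρ i a ≤ u i} = Set.Iic s ∧ margCDF ρ i s = u i)) ∧
          (¬ u i < 1 → s = 2) := by
        intro i
        by_cases h : u i < 1
        · haveI := hmiprob i
          obtain ⟨s, hs1, hs2⟩ := exists_cdf_level (ρ.map fun x : Fin d → ℝ => x i)
            (hmi_atom i) (hmi_lt0 i) (hmi_Iic1 i) (hneg i) h
          exact ⟨s, fun _ => ⟨hs1, hs2⟩, fun hc => absurd h hc⟩
        · exact ⟨2, fun hc => absurd hc h, fun _ => rfl⟩
      choose s hs1 hs2 using hchoice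
      set u' : Fin d → ℝ := fun i => if u i < 1 then u i else 1 with hu'def
      have hFs : ∀ i, margCDF ρ i (s i) = u' i := by
        intro i
        by_cases h : u i < 1
        · rw [hu'def]
          simp only [h, if_true]
          exact (hs1 i h).2
        · rw [hu'def]
          simp only [h, if_false]
          rw [hs2 i h]
          exact hmarg2 i
      have hNρ : ρ (⋃ j, {x : Fin d → ℝ | 1 < x j}) = 0 := measure_iUnion_null hρ_gt1
      have hNν : ν (⋃ j, {x : Fin d → ℝ | 1 < x j}) = 0 :=
        measure_iUnion_null (hgt1 ν hνmarg)
      have hL1 : ρ (F ⁻¹' {x : Fin d → ℝ | ∀ i, x i ≤ u i})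
          = ρ {x : Fin d → ℝ | ∀ i, x i ≤ s i} := by
        refine measure_congr_of_null ρ hNρ ?_
        intro x hx
        simp only [Set.mem_iUnion, Set.mem_setOf_eq, not_exists, not_lt] at hx
        simp only [Set.mem_preimage, Set.mem_setOf_eq]
        refine forall_congr' fun i => ?_
        by_cases h : u i < 1
        · constructor
          · intro hle
            have hmem : x i ∈ {a : ℝ | margCDF ρ i a ≤ u i} := hle
            rw [(hs1 i h).1] at hmem
            exact hmem
          · intro hle
            have hmem : x i ∈ Set.Iic (s i) := hle
            rw [← (hs1 i h).1] at hmem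
            exact hmem
        · constructor
          · intro _
            rw [hs2 i h]
            linarith [hx i]
          · intro _
            exact le_trans (hmarg_le_one i (x i)) (not_lt.1 h)
      have hL2 : ρ {x : Fin d → ℝ | ∀ i, x i ≤ s i} = ENNReal.ofReal (copulaFn ν u') := by
        have hsk' := hsk s
        rw [show (fun i => margCDF ρ i (s i)) = u' from funext hFs] at hsk'
        rw [← hsk', ENNReal.ofReal_toReal (measure_ne_top _ _)]
      have hR1 : ν {x : Fin d → ℝ | ∀ i, x i ≤ u i}
          = ν {x : Fin d → ℝ | ∀ i, x i ≤ u' i} := by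
        refine measure_congr_of_null ν hNν ?_
        intro x hx
        simp only [Set.mem_iUnion, Set.mem_setOf_eq, not_exists, not_lt] at hx
        simp only [Set.mem_setOf_eq]
        refine forall_congr' fun i => ?_
        rw [hu'def]
        by_cases h : u i < 1
        · simp [h]
        · simp only [h, if_false]
          constructor
          · intro _
            exact hx i
          · intro _
            exact le_trans (hx i) (not_lt.1 h)
      have hR2 : ν {x : Fin d → ℝ | ∀ i, x i ≤ u' i} = ENNReal.ofReal (copulaFn ν u') := by
        rw [show copulaFn ν u' = (ν {x : Fin d → ℝ | ∀ i, x i ≤ u' i}).toReal from rfl,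
          ENNReal.ofReal_toReal (measure_ne_top _ _)]
      rw [hL1, hL2, hR1, hR2]
  -- identification of ν with ρ.map F via the π-system of lower quadrants
  have hspan : IsCountablySpanning (Set.range (Set.Iic : ℝ → Set ℝ)) := by
    refine ⟨fun n => Set.Iic (n : ℝ), fun n => ⟨n, rfl⟩, ?_⟩
    ext x
    simp only [Set.mem_iUnion, Set.mem_Iic, Set.mem_univ, iff_true]
    obtain ⟨n, hn⟩ := exists_nat_ge x
    exact ⟨n, hn⟩
  have hgen : (inferInstance : MeasurableSpace (Fin d → ℝ)) =
      MeasurableSpace.generateFrom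
        (Set.pi Set.univ '' Set.pi Set.univ fun _ : Fin d => Set.range (Set.Iic : ℝ → Set ℝ)) := by
    have h1 : (inferInstance : MeasurableSpace ℝ)
        = MeasurableSpace.generateFrom (Set.range (Set.Iic : ℝ → Set ℝ)) :=
      (BorelSpace.measurable_eq).trans (borel_eq_generateFrom_Iic ℝ)
    calc (inferInstance : MeasurableSpace (Fin d → ℝ))
        = @MeasurableSpace.pi (Fin d) (fun _ => ℝ)
            (fun _ => MeasurableSpace.generateFrom (Set.range (Set.Iic : ℝ → Set ℝ))) := by
          exact congrArg (@MeasurableSpace.pi (Fin d) (fun _ => ℝ)) (funext fun _ => h1)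
      _ = MeasurableSpace.generateFrom
            (Set.pi Set.univ '' Set.pi Set.univ fun _ : Fin d =>
              Set.range (Set.Iic : ℝ → Set ℝ)) :=
          generateFrom_pi_eq fun _ => hspan
  have hpi : IsPiSystem
      (Set.pi Set.univ '' Set.pi Set.univ fun _ : Fin d => Set.range (Set.Iic : ℝ → Set ℝ)) := by
    rintro s ⟨f, hf, rfl⟩ v ⟨g, hg, rfl⟩ -
    choose a ha using fun i => hf i (Set.mem_univ i)
    choose b hb using fun i => hg i (Set.mem_univ i)
    refine ⟨fun i => f i ∩ g i, fun i _ => ⟨a i ⊓ b i, ?_⟩, Set.pi_inter_distrib⟩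
    show Set.Iic (a i ⊓ b i) = f i ∩ g i
    rw [← ha i, ← hb i, ← Set.Iic_inter_Iic]
  have hext : ρ.map F = ν := by
    refine ext_of_generate_finite _ hgen hpi ?_ (by simp)
    rintro s ⟨f, hf, rfl⟩
    choose a ha using fun i => hf i (Set.mem_univ i)
    have h : Set.pi Set.univ f = {x : Fin d → ℝ | ∀ i, x i ≤ a i} := by
      ext x
      simp only [Set.mem_pi, Set.mem_univ, forall_true_left, Set.mem_setOf_eq]
      refine forall_congr' fun i => ?_
      rw [← ha i]
      exact Iff.rfl
    rw [h]
    exact hmain a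
  -- final chain
  have hAmeas : MeasurableSet {v : Fin d → ℝ | copulaFn ν v ≤ t} :=
    measurableSet_le hCν measurable_const
  calc ν {v : Fin d → ℝ | copulaFn ν v ≤ t}
      = (ρ.map F) {v : Fin d → ℝ | copulaFn ν v ≤ t} := by rw [hext]
    _ = ρ (F ⁻¹' {v : Fin d → ℝ | copulaFn ν v ≤ t}) := Measure.map_apply hFmeas hAmeas
    _ = μ (sortVec ⁻¹' (F ⁻¹' {v : Fin d → ℝ | copulaFn ν v ≤ t})) := by
        rw [hρdef]
        exact Measure.map_apply hsm (hFmeas hAmeas)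
    _ ≤ μ {v : Fin d → ℝ | copulaFn μ v ≤ t} := by
        refine measure_mono fun v hv => ?_
        simp only [Set.mem_preimage, Set.mem_setOf_eq] at hv ⊢
        have hsk' := hsk (sortVec v)
        have hcv : copulaFn μ v ≤ (ρ {y : Fin d → ℝ | ∀ i, y i ≤ sortVec v i}).toReal := by
          rw [hρ_pre _ (hquad (sortVec v))]
          refine ENNReal.toReal_mono (measure_ne_top _ _) (measure_mono ?_)
          intro w hw i
          exact sortVec_mono hw i
        refine le_trans hcv ?_
        rw [hsk']
        exact hv
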